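/- For p×p matrices H, R, P with R and P positive definite, and vectors y, x, s in ℝ^p, the product of Gaussian densities satisfies 𝒩(y; Hx, R) · 𝒩(x; s, P) = 𝒩(y; Hs, R + H P Hᵀ) · 𝒩(x; ŝ, P̂), where K = P Hᵀ (H P Hᵀ + R)⁻¹, ŝ = s + K(y − Hs), and P̂ = (I − K H) P. -/
import Mathlib


open Matrix
open scoped Real

/-- The multivariate Gaussian density
`𝒩(z; m, S) = (2π)^{-p/2} det(S)^{-1/2} exp(−½ (z−m)ᵀ S⁻¹ (z−m))`. -/
noncomputable def gaussDens (p : ℕ) (z m : Fin p → ℝ)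
    (S : Matrix (Fin p) (Fin p) ℝ) : ℝ :=
  (2 * π) ^ (-(p : ℝ) / 2) * S.det ^ (-(1 : ℝ) / 2) *
    Real.exp (-(1 / 2) * ((z - m) ⬝ᵥ (S⁻¹ *ᵥ (z - m))))


private lemma dp_move {p : ℕ} (A : Matrix (Fin p) (Fin p) ℝ) (u w : Fin p → ℝ) :
    (A *ᵥ u) ⬝ᵥ w = u ⬝ᵥ (Aᵀ *ᵥ w) := by
  rw [dotProduct_mulVec, vecMul_transpose]

private lemma dp_symm {p : ℕ} (A : Matrix (Fin p) (Fin p) ℝ) (hA : Aᵀ = A) (u w : Fin p → ℝ) :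
    u ⬝ᵥ (A *ᵥ w) = w ⬝ᵥ (A *ᵥ u) := by
  rw [← hA, ← dp_move, dotProduct_comm, hA]

/-- **Gaussian product lemma.** For `p×p` matrices `H, R, P` with `R` and `P`
positive definite, and vectors `y, x, s ∈ ℝᵖ`,
`𝒩(y; Hx, R) · 𝒩(x; s, P) = 𝒩(y; Hs, R + HPHᵀ) · 𝒩(x; ŝ, P̂)`, where
`K = PHᵀ(HPHᵀ + R)⁻¹`, `ŝ = s + K(y − Hs)`, and `P̂ = (I − KH)P`. -/
theorem gauss_product {p : ℕ} (H R P : Matrix (Fin p) (Fin p) ℝ)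
    (hR : R.PosDef) (hP : P.PosDef)
    (y x s : Fin p → ℝ)
    (K : Matrix (Fin p) (Fin p) ℝ)
    (hK : K = P * Hᵀ * (H * P * Hᵀ + R)⁻¹) :
    gaussDens p y (H *ᵥ x) R * gaussDens p x s P
      = gaussDens p y (H *ᵥ s) (R + H * P * Hᵀ) *
        gaussDens p x (s + K *ᵥ (y - H *ᵥ s)) ((1 - K * H) * P) := by
  set S := R + H * P * Hᵀ with hSdef
  have hKS : K = P * Hᵀ * S⁻¹ := by rw [hK, add_comm (H * P * Hᵀ) R]
  have hHPHt : (H * P * Hᵀ).PosSemidef := by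
    have := hP.posSemidef.mul_mul_conjTranspose_same H
    rwa [conjTranspose_eq_transpose_of_trivial] at this
  have hS : S.PosDef := hR.add_posSemidef hHPHt
  have hRu : IsUnit R.det := isUnit_iff_ne_zero.mpr hR.det_pos.ne'
  have hPu : IsUnit P.det := isUnit_iff_ne_zero.mpr hP.det_pos.ne'
  have hSu : IsUnit S.det := isUnit_iff_ne_zero.mpr hS.det_pos.ne'
  have hRt : Rᵀ = R := by rw [← conjTranspose_eq_transpose_of_trivial]; exact hR.1
  have hPt : Pᵀ = P := by rw [← conjTranspose_eq_transpose_of_trivial]; exact hP.1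
  have hSt : Sᵀ = S := by rw [← conjTranspose_eq_transpose_of_trivial]; exact hS.1
  have hRit : (R⁻¹)ᵀ = R⁻¹ := by rw [transpose_nonsing_inv, hRt]
  have hPit : (P⁻¹)ᵀ = P⁻¹ := by rw [transpose_nonsing_inv, hPt]
  have hSit : (S⁻¹)ᵀ = S⁻¹ := by rw [transpose_nonsing_inv, hSt]
  set M := P⁻¹ + Hᵀ * R⁻¹ * H with hMdef
  have hMt : Mᵀ = M := by
    rw [hMdef, transpose_add, hPit, transpose_mul, transpose_mul, transpose_transpose, hRit,
      mul_assoc]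
  -- key matrix identities
  have hMK : M * K = Hᵀ * R⁻¹ := by
    have h1 : M * (P * Hᵀ) = Hᵀ * R⁻¹ * S := by
      have e1 : P⁻¹ * (P * Hᵀ) = Hᵀ := by rw [← mul_assoc, nonsing_inv_mul _ hPu, one_mul]
      have e2 : Hᵀ * R⁻¹ * R = Hᵀ := by rw [mul_assoc, nonsing_inv_mul _ hRu, mul_one]
      calc M * (P * Hᵀ) = P⁻¹ * (P * Hᵀ) + Hᵀ * R⁻¹ * H * (P * Hᵀ) := by
            rw [hMdef, add_mul]
        _ = Hᵀ * R⁻¹ * R + Hᵀ * R⁻¹ * (H * P * Hᵀ) := by rw [e1, e2]; noncomm_ring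
        _ = Hᵀ * R⁻¹ * S := by rw [hSdef, mul_add]
    calc M * K = M * (P * Hᵀ) * S⁻¹ := by rw [hKS, ← mul_assoc]
      _ = Hᵀ * R⁻¹ := by rw [h1, mul_assoc, mul_nonsing_inv _ hSu, mul_one]
  have hMPhat : M * ((1 - K * H) * P) = 1 := by
    have h2 : M * (1 - K * H) = P⁻¹ := by
      rw [mul_sub, mul_one, ← mul_assoc, hMK, hMdef]
      noncomm_ring
    rw [← mul_assoc, h2, nonsing_inv_mul _ hPu]
  have hPhat_inv : ((1 - K * H) * P)⁻¹ = M := inv_eq_left_inv hMPhat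
  have hHK : H * K = 1 - R * S⁻¹ := by
    have h3 : H * P * Hᵀ = S - R := by rw [hSdef]; noncomm_ring
    rw [hKS, ← mul_assoc, ← mul_assoc, h3, sub_mul, mul_nonsing_inv _ hSu]
  have hKtMK : Kᵀ * (M * K) = R⁻¹ - S⁻¹ := by
    have h4 : Kᵀ * Hᵀ = 1 - S⁻¹ * R := by
      rw [← transpose_mul, hHK, transpose_sub, transpose_one, transpose_mul, hSit, hRt]
    rw [hMK, ← mul_assoc, h4, sub_mul, one_mul, mul_assoc, mul_nonsing_inv _ hRu, mul_one]
  -- determinants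
  have hdetM : M.det = P.det⁻¹ * (R.det⁻¹ * S.det) := by
    have hpe : P⁻¹ * (P * Hᵀ) = Hᵀ := by rw [← mul_assoc, nonsing_inv_mul _ hPu, one_mul]
    have hM2 : M = P⁻¹ * (1 + (P * Hᵀ) * (R⁻¹ * H)) := by
      rw [mul_add, mul_one, ← mul_assoc, hpe, ← mul_assoc, hMdef]
    have hRS : (1 : Matrix (Fin p) (Fin p) ℝ) + (R⁻¹ * H) * (P * Hᵀ) = R⁻¹ * S := by
      rw [hSdef, mul_add, nonsing_inv_mul _ hRu]
      noncomm_ring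
    rw [hM2, det_mul, det_one_add_mul_comm, hRS, det_mul, det_nonsing_inv, det_nonsing_inv]
    simp [Ring.inverse_eq_inv']
  have hdetPhat : ((1 - K * H) * P).det = R.det * P.det * S.det⁻¹ := by
    have h := congrArg det hMPhat
    rw [det_mul, det_one, hdetM] at h
    have hRd := hR.det_pos.ne'
    have hPd := hP.det_pos.ne'
    have hSd := hS.det_pos.ne'
    field_simp at h ⊢
    linarith [h]
  -- quadratic forms
  set u : Fin p → ℝ := x - s with hu
  set v : Fin p → ℝ := y - H *ᵥ s with hv
  have hyx : y - H *ᵥ x = v - H *ᵥ u := by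
    rw [hv, hu, mulVec_sub]; abel
  have hxs : x - (s + K *ᵥ v) = u - K *ᵥ v := by
    rw [hu]; abel
  have e1 : v ⬝ᵥ (R⁻¹ *ᵥ (H *ᵥ u)) = (H *ᵥ u) ⬝ᵥ (R⁻¹ *ᵥ v) := dp_symm R⁻¹ hRit v (H *ᵥ u)
  have e2 : u ⬝ᵥ (M *ᵥ u) = u ⬝ᵥ (P⁻¹ *ᵥ u) + (H *ᵥ u) ⬝ᵥ (R⁻¹ *ᵥ (H *ᵥ u)) := by
    rw [dp_move H u, mulVec_mulVec, mulVec_mulVec, hMdef, add_mulVec, dotProduct_add]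
  have e3 : u ⬝ᵥ (M *ᵥ (K *ᵥ v)) = (H *ᵥ u) ⬝ᵥ (R⁻¹ *ᵥ v) := by
    rw [mulVec_mulVec, hMK, ← mulVec_mulVec, ← dp_move]
  have e4 : (K *ᵥ v) ⬝ᵥ (M *ᵥ u) = (H *ᵥ u) ⬝ᵥ (R⁻¹ *ᵥ v) := by
    rw [dp_symm M hMt (K *ᵥ v) u, e3]
  have e5 : (K *ᵥ v) ⬝ᵥ (M *ᵥ (K *ᵥ v)) = v ⬝ᵥ (R⁻¹ *ᵥ v) - v ⬝ᵥ (S⁻¹ *ᵥ v) := by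
    rw [dp_move K v, mulVec_mulVec, mulVec_mulVec, mul_assoc, hKtMK, sub_mulVec, dotProduct_sub]
  have hquad :
      (v - H *ᵥ u) ⬝ᵥ (R⁻¹ *ᵥ (v - H *ᵥ u)) + u ⬝ᵥ (P⁻¹ *ᵥ u)
        = v ⬝ᵥ (S⁻¹ *ᵥ v) + (u - K *ᵥ v) ⬝ᵥ (M *ᵥ (u - K *ᵥ v)) := by
    simp only [mulVec_sub, dotProduct_sub, sub_dotProduct]
    rw [e1, e2, e3, e4, e5]
    ring
  -- assemble
  unfold gaussDens
  rw [hPhat_inv, hyx, hxs]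
  have hdets : R.det ^ (-(1 : ℝ) / 2) * P.det ^ (-(1 : ℝ) / 2)
      = S.det ^ (-(1 : ℝ) / 2) * ((1 - K * H) * P).det ^ (-(1 : ℝ) / 2) := by
    have hPhpos : (0:ℝ) < ((1 - K * H) * P).det := by
      rw [hdetPhat]
      exact mul_pos (mul_pos hR.det_pos hP.det_pos) (inv_pos.mpr hS.det_pos)
    rw [← Real.mul_rpow hR.det_pos.le hP.det_pos.le,
      ← Real.mul_rpow hS.det_pos.le hPhpos.le, hdetPhat]
    congr 1
    rw [mul_comm S.det, mul_assoc, inv_mul_cancel₀ hS.det_pos.ne', mul_one]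
  have hexp : Real.exp (-(1 / 2) * ((v - H *ᵥ u) ⬝ᵥ (R⁻¹ *ᵥ (v - H *ᵥ u)))) *
      Real.exp (-(1 / 2) * (u ⬝ᵥ (P⁻¹ *ᵥ u)))
      = Real.exp (-(1 / 2) * (v ⬝ᵥ (S⁻¹ *ᵥ v))) *
        Real.exp (-(1 / 2) * ((u - K *ᵥ v) ⬝ᵥ (M *ᵥ (u - K *ᵥ v)))) := by
    rw [← Real.exp_add, ← Real.exp_add]
    congr 1
    nlinarith [hquad]
  calc (2 * π) ^ (-(p : ℝ) / 2) * R.det ^ (-(1:ℝ) / 2) *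
        Real.exp (-(1/2) * ((v - H *ᵥ u) ⬝ᵥ (R⁻¹ *ᵥ (v - H *ᵥ u)))) *
        ((2 * π) ^ (-(p : ℝ) / 2) * P.det ^ (-(1:ℝ) / 2) *
        Real.exp (-(1/2) * (u ⬝ᵥ (P⁻¹ *ᵥ u))))
      = (2 * π) ^ (-(p : ℝ) / 2) * (2 * π) ^ (-(p : ℝ) / 2) *
        (R.det ^ (-(1:ℝ) / 2) * P.det ^ (-(1:ℝ) / 2)) *
        (Real.exp (-(1/2) * ((v - H *ᵥ u) ⬝ᵥ (R⁻¹ *ᵥ (v - H *ᵥ u)))) *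
         Real.exp (-(1/2) * (u ⬝ᵥ (P⁻¹ *ᵥ u)))) := by ring
    _ = (2 * π) ^ (-(p : ℝ) / 2) * (2 * π) ^ (-(p : ℝ) / 2) *
        (S.det ^ (-(1:ℝ) / 2) * ((1 - K * H) * P).det ^ (-(1:ℝ) / 2)) *
        (Real.exp (-(1/2) * (v ⬝ᵥ (S⁻¹ *ᵥ v))) *
         Real.exp (-(1/2) * ((u - K *ᵥ v) ⬝ᵥ (M *ᵥ (u - K *ᵥ v))))) := by
          rw [hdets, hexp]
    _ = _ := by ring
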